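/- Let Z ~ Gamma(N, θ_Z) with positive integer shape N, and L ~ Gamma(D, θ_L) with D > 0, independent. Then for x ≥ 0, P(Z/(L+1) ≤ x) = 1 − Σ_{m=0}^{N−1} Σ_{n=0}^{N−m−1} [θ_L^n θ_Z^{D−m} Γ(n+D) / (m! n! Γ(D))] · exp(−x/θ_Z) · x^{m+n} / (x θ_L + θ_Z)^{n+D}. -/

import Mathlib

open MeasureTheory ProbabilityTheory Real Finset

open scoped ENNReal NNReal

lemma hasDerivAt_expSum (r : ℝ) (t : ℝ) {N : ℕ} (hN : 1 ≤ N) :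
    HasDerivAt (fun s => Real.exp (-(r*s)) * ∑ m ∈ range N, (r*s)^m / m.factorial)
      (-(r * Real.exp (-(r*t)) * (r*t)^(N-1) / (N-1).factorial)) t := by
  have hexp : HasDerivAt (fun s : ℝ => Real.exp (-(r*s))) (Real.exp (-(r*t)) * -(r*1)) t :=
    (((hasDerivAt_id t).const_mul r).neg).exp
  induction N with
  | zero => omega
  | succ n ih =>
    rcases Nat.eq_zero_or_pos n with hn | hn
    · subst hn
      simp only [Finset.sum_range_one, pow_zero, Nat.factorial_zero, Nat.cast_one, div_one,
        mul_one, Nat.zero_add, Nat.sub_self]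
      convert hexp using 1
      ring
    · have h2 : HasDerivAt (fun s => Real.exp (-(r*s)) * ((r*s)^n / n.factorial))
          (Real.exp (-(r*t)) * -(r*1) * ((r*t)^n / n.factorial)
            + Real.exp (-(r*t)) * ((↑n * (r*t)^(n-1) * (r*1)) / n.factorial)) t :=
        hexp.mul ((((hasDerivAt_id t).const_mul r).pow n).div_const _)
      have h3 := (ih hn).add h2
      have heq : (fun s => Real.exp (-(r*s)) * ∑ m ∈ range (n+1), (r*s)^m / m.factorial)
          = fun s => (Real.exp (-(r*s)) * ∑ m ∈ range n, (r*s)^m / m.factorial)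
            + Real.exp (-(r*s)) * ((r*s)^n / n.factorial) := by
        funext s; rw [Finset.sum_range_succ, mul_add]
      rw [heq]
      refine h3.congr_deriv ?_
      obtain ⟨k, rfl⟩ : ∃ k, n = k+1 := ⟨n-1, by omega⟩
      simp only [Nat.add_sub_cancel, Nat.factorial_succ, pow_succ, Nat.cast_mul, Nat.cast_add,
        Nat.cast_one]
      have hk : (k.factorial : ℝ) ≠ 0 := Nat.cast_ne_zero.mpr k.factorial_ne_zero
      have hk1 : ((k:ℝ)+1) ≠ 0 := by positivity
      field_simp
      ring

lemma gammaMeasure_Iic {r : ℝ} (hr : 0 < r) {N : ℕ} (hN : 1 ≤ N) {t : ℝ} (ht : 0 ≤ t) :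
    gammaMeasure (N:ℝ) r (Set.Iic t)
      = ENNReal.ofReal (1 - Real.exp (-(r*t)) * ∑ m ∈ range N, (r*t)^m / m.factorial) := by
  set q : ℝ → ℝ := fun s => r * Real.exp (-(r*s)) * (r*s)^(N-1) / (N-1).factorial with hq
  have hqc : Continuous q := by
    fun_prop
  have hqnn : ∀ s, 0 ≤ s → 0 ≤ q s := by
    intro s hs
    have : 0 ≤ (r*s)^(N-1) := pow_nonneg (by positivity) _
    positivity
  -- pdf equals q on nonneg reals
  have hpdf : ∀ s : ℝ, 0 ≤ s → gammaPDF (N:ℝ) r s = ENNReal.ofReal (q s) := by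
    intro s hs
    rw [gammaPDF_of_nonneg hs]
    congr 1
    have hΓ : Real.Gamma (N:ℝ) = (N-1).factorial := by
      have := Real.Gamma_nat_eq_factorial (N-1)
      rwa [show ((N-1 : ℕ):ℝ) + 1 = (N:ℝ) by push_cast [Nat.cast_sub hN]; ring] at this
    have h1 : r ^ (N:ℝ) = r ^ N := Real.rpow_natCast r N
    have h2 : s ^ ((N:ℝ)-1) = s ^ (N-1) := by
      rw [show ((N:ℝ) - 1) = ((N-1 : ℕ):ℝ) by push_cast [Nat.cast_sub hN]; ring,
        Real.rpow_natCast]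
    rw [hΓ, h1, h2, hq]
    obtain ⟨k, rfl⟩ : ∃ k, N = k+1 := ⟨N-1, by omega⟩
    simp only [Nat.add_sub_cancel, pow_succ, mul_pow]
    field_simp
  -- FTC
  have hderiv : ∀ s ∈ Set.uIcc 0 t,
      HasDerivAt (fun u => 1 - Real.exp (-(r*u)) * ∑ m ∈ range N, (r*u)^m / m.factorial)
        (q s) s := by
    intro s _
    have := (hasDerivAt_expSum r s hN).const_sub 1
    refine this.congr_deriv ?_
    rw [hq]; ring
  have hFTC : ∫ s in (0:ℝ)..t, q s
      = (1 - Real.exp (-(r*t)) * ∑ m ∈ range N, (r*t)^m / m.factorial)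
        - (1 - Real.exp (-(r*0)) * ∑ m ∈ range N, (r*0)^m / m.factorial) :=
    intervalIntegral.integral_eq_sub_of_hasDerivAt hderiv (hqc.intervalIntegrable 0 t)
  have hzero : Real.exp (-(r*0)) * ∑ m ∈ range N, (r*0)^m / m.factorial = 1 := by
    rw [Finset.sum_eq_single_of_mem 0 (Finset.mem_range.mpr hN)]
    · norm_num
    · intro m _ hm
      simp [zero_pow hm]
  rw [gammaMeasure, withDensity_apply _ measurableSet_Iic,
    lintegral_Iic_eq_lintegral_Iio_add_Icc _ ht, lintegral_gammaPDF_of_nonpos le_rfl, zero_add]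
  rw [setLIntegral_congr_fun measurableSet_Icc
    (fun s hs => hpdf s hs.1)]
  rw [← MeasureTheory.ofReal_integral_eq_lintegral_ofReal
    (hqc.integrableOn_Icc) ((ae_restrict_iff' measurableSet_Icc).mpr
      (Filter.Eventually.of_forall fun s hs => hqnn s hs.1))]
  congr 1
  rw [MeasureTheory.integral_Icc_eq_integral_Ioc, ← intervalIntegral.integral_of_le ht, hFTC,
    hzero]
  ring

lemma integrableOn_rpow_exp {a β : ℝ} (ha : 0 < a) (hβ : 0 < β) :
    IntegrableOn (fun l : ℝ => l ^ (a - 1) * Real.exp (-(β*l))) (Set.Ioi 0) := by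
  have h := integrableOn_rpow_mul_exp_neg_mul_rpow (p := 1) (s := a - 1) (b := β)
    (by linarith) zero_lt_one hβ
  refine h.congr_fun (fun l hl => ?_) measurableSet_Ioi
  simp only [Real.rpow_one]
  ring_nf

lemma integral_rpow_exp {a β : ℝ} (ha : 0 < a) (hβ : 0 < β) :
    ∫ l in Set.Ioi (0:ℝ), l ^ (a - 1) * Real.exp (-(β*l)) = (1/β) ^ a * Real.Gamma a :=
  integral_rpow_mul_exp_neg_mul_Ioi ha hβ

lemma sum_triangle_reindex (N : ℕ) (f : ℕ → ℕ → ℝ) :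
    ∑ m ∈ range N, ∑ k ∈ range (m+1), f m k
      = ∑ p ∈ range N, ∑ n ∈ range (N - p), f (p+n) n := by
  rw [Finset.sum_sigma', Finset.sum_sigma']
  refine Finset.sum_nbij' (fun x => ⟨x.1 - x.2, x.2⟩) (fun x => ⟨x.1 + x.2, x.2⟩) ?_ ?_ ?_ ?_ ?_
  · rintro ⟨m, k⟩ h
    simp only [Finset.mem_sigma, Finset.mem_range] at h ⊢
    omega
  · rintro ⟨p, n⟩ h
    simp only [Finset.mem_sigma, Finset.mem_range] at h ⊢
    omega
  · rintro ⟨m, k⟩ h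
    simp only [Finset.mem_sigma, Finset.mem_range] at h
    simp only [Sigma.mk.inj_iff, heq_eq_eq]
    exact ⟨by omega, trivial⟩
  · rintro ⟨p, n⟩ h
    simp only [Sigma.mk.inj_iff, heq_eq_eq]
    exact ⟨by omega, trivial⟩
  · rintro ⟨m, k⟩ h
    simp only [Finset.mem_sigma, Finset.mem_range] at h
    have : m - k + k = m := by omega
    simp [this]

lemma integrable_gammaPDFReal {a r : ℝ} (ha : 0 < a) (hr : 0 < r) :
    Integrable (gammaPDFReal a r) := by
  refine ⟨(measurable_gammaPDFReal a r).aestronglyMeasurable, ?_⟩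
  rw [hasFiniteIntegral_iff_ofReal (Filter.Eventually.of_forall (gammaPDFReal_nonneg ha hr))]
  have : ∫⁻ x, ENNReal.ofReal (gammaPDFReal a r x) = 1 := lintegral_gammaPDF_eq_one ha hr
  simp [this]

lemma integral_gammaPDFReal {a r : ℝ} (ha : 0 < a) (hr : 0 < r) :
    ∫ l, gammaPDFReal a r l = 1 := by
  rw [integral_eq_lintegral_of_nonneg_ae
    (Filter.Eventually.of_forall (gammaPDFReal_nonneg ha hr))
    (measurable_gammaPDFReal a r).aestronglyMeasurable]
  rw [show ∫⁻ x, ENNReal.ofReal (gammaPDFReal a r x) = 1 from lintegral_gammaPDF_eq_one ha hr]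
  simp

lemma pdf_mul_H_key {rZ rL D : ℝ} (hrZ : 0 < rZ) (hrL : 0 < rL) (hD : 0 < D)
    (N : ℕ) {x : ℝ} (hx : 0 ≤ x) :
    Integrable (fun l => gammaPDFReal D rL l *
        (Real.exp (-(rZ*(x*(l+1)))) * ∑ m ∈ range N, (rZ*(x*(l+1)))^m / m.factorial)) ∧
    ∫ l, gammaPDFReal D rL l *
        (Real.exp (-(rZ*(x*(l+1)))) * ∑ m ∈ range N, (rZ*(x*(l+1)))^m / m.factorial)
      = ∑ m ∈ range N, ∑ k ∈ range (m+1),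
          (rL^D / Real.Gamma D) * Real.exp (-(rZ*x)) * ((rZ*x)^m / m.factorial) * (m.choose k)
            * ((1/(rZ*x+rL))^((k:ℝ)+D) * Real.Gamma ((k:ℝ)+D)) := by
  set β : ℝ := rZ*x + rL with hβdef
  have hβ : 0 < β := by positivity
  set c : ℕ → ℕ → ℝ := fun m k =>
    (rL^D / Real.Gamma D) * Real.exp (-(rZ*x)) * ((rZ*x)^m / m.factorial) * (m.choose k)
    with hcdef
  set φ : ℕ → ℝ → ℝ := fun k l => l ^ ((k:ℝ)+D-1) * Real.exp (-(β*l)) with hφdef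
  set g : ℝ → ℝ := fun l => gammaPDFReal D rL l *
      (Real.exp (-(rZ*(x*(l+1)))) * ∑ m ∈ range N, (rZ*(x*(l+1)))^m / m.factorial) with hgdef
  have hφint : ∀ k : ℕ, IntegrableOn (φ k) (Set.Ioi 0) := fun k =>
    integrableOn_rpow_exp (by positivity) hβ
  -- pointwise identity on Ioi 0
  have hpt : ∀ l ∈ Set.Ioi (0:ℝ), g l = ∑ m ∈ range N, ∑ k ∈ range (m+1), c m k * φ k l := by
    intro l hl
    have hl : (0:ℝ) < l := hl
    have hpdf : gammaPDFReal D rL l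
        = rL^D / Real.Gamma D * l^(D-1) * Real.exp (-(rL*l)) := by
      rw [gammaPDFReal, if_pos hl.le]
    have hE : Real.exp (-(rZ*(x*(l+1))))
        = Real.exp (-(rZ*x)) * Real.exp (-(rZ*x*l)) := by
      rw [← Real.exp_add]; congr 1; ring
    have hQ : ∀ m : ℕ, (rZ*(x*(l+1)))^m
        = ∑ k ∈ range (m+1), (rZ*x)^m * ((m.choose k : ℝ) * l^k) := by
      intro m
      rw [show rZ*(x*(l+1)) = (rZ*x)*(l+1) by ring, mul_pow, add_pow, Finset.mul_sum]
      exact Finset.sum_congr rfl fun k _ => by ring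
    rw [hgdef]
    simp only [hpdf, hE, hQ]
    simp only [Finset.mul_sum, Finset.sum_div]
    refine Finset.sum_congr rfl fun m _ => ?_
    refine Finset.sum_congr rfl fun k _ => ?_
    have h3 : l^(D-1) * (l:ℝ)^(k:ℕ) = l^((k:ℝ)+D-1) := by
      rw [← Real.rpow_natCast l k, ← Real.rpow_add hl]; ring_nf
    have h4 : Real.exp (-(rL*l)) * Real.exp (-(rZ*x*l)) = Real.exp (-(β*l)) := by
      rw [← Real.exp_add]; congr 1; rw [hβdef]; ring
    simp only [hcdef, hφdef]
    rw [← h3, ← h4]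
    ring
  -- integrability of the sum on Ioi 0
  have hsumint : IntegrableOn
      (fun l => ∑ m ∈ range N, ∑ k ∈ range (m+1), c m k * φ k l) (Set.Ioi 0) :=
    integrable_finset_sum _ fun m _ => integrable_finset_sum _ fun k _ =>
      (hφint k).const_mul (c m k)
  have hgIoi : IntegrableOn g (Set.Ioi 0) :=
    hsumint.congr_fun (fun l hl => (hpt l hl).symm) measurableSet_Ioi
  -- g vanishes on negatives
  have hgneg : ∀ l : ℝ, l < 0 → g l = 0 := by
    intro l hl
    rw [hgdef]
    simp only [gammaPDFReal, if_neg (not_le.mpr hl), zero_mul]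
  have hgint : Integrable g := by
    rw [← integrableOn_univ, ← Set.Iic_union_Ioi (a := (0:ℝ))]
    refine IntegrableOn.union ?_ hgIoi
    rw [integrableOn_Iic_iff_integrableOn_Iio]
    exact (integrableOn_zero (ε' := ℝ)).congr_fun (fun l hl => (hgneg l hl).symm) measurableSet_Iio
  refine ⟨hgint, ?_⟩
  have hae : ∀ᵐ l : ℝ, l ∉ Set.Ioi (0:ℝ) → g l = 0 := by
    have h0 : ∀ᵐ l : ℝ, l ∉ ({0} : Set ℝ) :=
      measure_eq_zero_iff_ae_notMem.mp Real.volume_singleton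
    filter_upwards [h0] with l hl0 hl
    exact hgneg l (by simp only [Set.mem_Ioi, not_lt] at hl; simp at hl0; cases hl.lt_or_eq with
      | inl h => exact h
      | inr h => exact absurd h hl0)
  rw [show ∫ l, g l = ∫ l in Set.Ioi (0:ℝ), g l from
    (setIntegral_eq_integral_of_ae_compl_eq_zero hae).symm]
  rw [setIntegral_congr_fun measurableSet_Ioi hpt]
  rw [integral_finset_sum _ fun m _ => integrable_finset_sum _ fun k _ =>
    (hφint k).const_mul (c m k)]
  refine Finset.sum_congr rfl fun m _ => ?_
  rw [integral_finset_sum _ fun k _ => (hφint k).const_mul (c m k)]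
  refine Finset.sum_congr rfl fun k _ => ?_
  rw [MeasureTheory.integral_const_mul, integral_rpow_exp (by positivity) hβ]

lemma term_algebra {θZ θL D : ℝ} (hθZ : 0 < θZ) (hθL : 0 < θL) (hD : 0 < D) {x : ℝ}
    (hx : 0 ≤ x) (p n : ℕ) :
    ((1/θL)^D / Real.Gamma D) * Real.exp (-((1/θZ)*x)) * (((1/θZ)*x)^(p+n) / (p+n).factorial)
        * ((p+n).choose n : ℝ)
        * ((1/((1/θZ)*x+(1/θL)))^((n:ℝ)+D) * Real.Gamma ((n:ℝ)+D))
      = (θL ^ n * θZ ^ (D - p) * Real.Gamma (n + D)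
          / ((p.factorial : ℝ) * n.factorial * Real.Gamma D))
          * Real.exp (-x / θZ) * x ^ (p + n) / (x * θL + θZ) ^ ((n : ℝ) + D) := by
  have hden : (0:ℝ) < x*θL+θZ := by positivity
  have e1 : (1:ℝ)/((1/θZ)*x+(1/θL)) = θZ*θL/(x*θL+θZ) := by
    rw [eq_div_iff hden.ne']
    field_simp
  have hA : ((1:ℝ)/((1/θZ)*x+(1/θL)))^((n:ℝ)+D)
      = θZ^((n:ℝ)+D) * θL^((n:ℝ)+D) / (x*θL+θZ)^((n:ℝ)+D) := by
    rw [e1, Real.div_rpow (by positivity) hden.le, Real.mul_rpow hθZ.le hθL.le]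
  have hB : ((1:ℝ)/θL)^D = 1/θL^D := by
    rw [Real.div_rpow (by norm_num) hθL.le, Real.one_rpow]
  have hC : ((1/θZ)*x)^(p+n) = x^(p+n)/θZ^(p+n) := by
    rw [show (1/θZ)*x = x/θZ by ring, div_pow]
  have hD1 : θZ^((n:ℝ)+D) = θZ^(D-(p:ℝ)) * θZ^(p+n : ℕ) := by
    rw [← Real.rpow_natCast θZ (p+n), ← Real.rpow_add hθZ]
    congr 1
    push_cast
    ring
  have hE : θL^((n:ℝ)+D) = θL^(n:ℕ) * θL^D := by
    rw [← Real.rpow_natCast θL n, ← Real.rpow_add hθL]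
  have hFac : ((p+n).factorial : ℝ) = ((p+n).choose n : ℝ) * p.factorial * n.factorial := by
    exact_mod_cast congrArg Nat.cast (Nat.add_choose_mul_factorial_mul_factorial p n).symm
  have hexp : Real.exp (-((1/θZ)*x)) = Real.exp (-x/θZ) := by
    congr 1
    ring
  rw [hA, hB, hC, hD1, hE, hFac, hexp]
  have h1 : (Real.Gamma D) ≠ 0 := (Real.Gamma_pos_of_pos hD).ne'
  have h2 : θZ^(p+n:ℕ) ≠ 0 := by positivity
  have h3 : (x*θL+θZ)^((n:ℝ)+D) ≠ 0 := (Real.rpow_pos_of_pos hden _).ne'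
  have h4 : θL^D ≠ 0 := (Real.rpow_pos_of_pos hθL _).ne'
  have h5 : ((p+n).choose n : ℝ) ≠ 0 := Nat.cast_ne_zero.mpr (Nat.choose_pos (by omega)).ne'
  have h6 : (p.factorial : ℝ) ≠ 0 := Nat.cast_ne_zero.mpr p.factorial_ne_zero
  have h7 : (n.factorial : ℝ) ≠ 0 := Nat.cast_ne_zero.mpr n.factorial_ne_zero
  field_simp

/-- CDF of `Z/(L+1)` for independent `Z ~ Gamma(N, θZ)` (integer shape) and
`L ~ Gamma(D, θL)` (Lemma 2 of the paper). -/
theorem cdf_gamma_div_gamma_add_one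
    {Ω : Type*} [MeasurableSpace Ω] (μ : Measure Ω) [IsProbabilityMeasure μ]
    (Z L : Ω → ℝ) (hZ : Measurable Z) (hL : Measurable L)
    (hind : IndepFun Z L μ)
    (N : ℕ) (hN : 1 ≤ N) (D θZ θL : ℝ) (hD : 0 < D) (hθZ : 0 < θZ) (hθL : 0 < θL)
    (hZd : Measure.map Z μ = gammaMeasure (N : ℝ) (1 / θZ))
    (hLd : Measure.map L μ = gammaMeasure D (1 / θL))
    (x : ℝ) (hx : 0 ≤ x) :
    (μ {ω | Z ω / (L ω + 1) ≤ x}).toReal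
      = 1 - ∑ m ∈ range N, ∑ n ∈ range (N - m),
          (θL ^ n * θZ ^ (D - m) * Real.Gamma (n + D)
              / ((m.factorial : ℝ) * n.factorial * Real.Gamma D))
            * Real.exp (-x / θZ) * x ^ (m + n) / (x * θL + θZ) ^ ((n : ℝ) + D) := by
  set rZ : ℝ := 1/θZ with hrZdef
  set rL : ℝ := 1/θL with hrLdef
  have hrZ : 0 < rZ := by positivity
  have hrL : 0 < rL := by positivity
  set νZ : Measure ℝ := gammaMeasure (N:ℝ) rZ with hνZ
  set νL : Measure ℝ := gammaMeasure D rL with hνL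
  haveI : IsProbabilityMeasure νZ := isProbabilityMeasure_gammaMeasure (by positivity) hrZ
  haveI : IsProbabilityMeasure νL := isProbabilityMeasure_gammaMeasure hD hrL
  -- L is a.e. nonnegative
  have hLiio : νL (Set.Iio 0) = 0 := by
    rw [hνL, gammaMeasure, withDensity_apply _ measurableSet_Iio,
      lintegral_gammaPDF_of_nonpos le_rfl]
  have hL0 : ∀ᵐ ω ∂μ, 0 ≤ L ω := by
    have hnull : μ (L ⁻¹' Set.Iio 0) = 0 := by
      rw [← Measure.map_apply hL measurableSet_Iio, hLd]
      exact hLiio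
    rw [ae_iff]
    convert hnull using 2
    ext ω
    simp [not_le]
  -- event rewriting
  set S : Set (ℝ × ℝ) := {p : ℝ × ℝ | p.2 ≤ x*(p.1+1)} with hSdef
  have hS : MeasurableSet S :=
    measurableSet_le measurable_snd ((measurable_fst.add_const 1).const_mul x)
  have hsets : μ {ω | Z ω / (L ω + 1) ≤ x} = μ ((fun ω => (L ω, Z ω)) ⁻¹' S) := by
    refine measure_congr ?_
    rw [Filter.eventuallyEq_set]
    filter_upwards [hL0] with ω hω
    have hpos : 0 < L ω + 1 := by linarith
    simp only [Set.mem_setOf_eq, Set.mem_preimage, hSdef]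
    rw [div_le_iff₀ hpos]
  -- product measure
  have hmap : Measure.map (fun ω => (L ω, Z ω)) μ = νL.prod νZ := by
    rw [(indepFun_iff_map_prod_eq_prod_map_map hL.aemeasurable hZ.aemeasurable).mp hind.symm,
      hLd, hZd]
  have hslice : ∀ l : ℝ, Prod.mk l ⁻¹' S = Set.Iic (x*(l+1)) := by
    intro l
    ext z
    simp [hSdef]
  have hmeas : μ {ω | Z ω / (L ω + 1) ≤ x} = ∫⁻ l, νZ (Set.Iic (x*(l+1))) ∂νL := by
    rw [hsets, ← Measure.map_apply (hL.prodMk hZ) hS, hmap, Measure.prod_apply hS]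
    simp_rw [hslice]
  -- to a real integral
  have hfmeas : AEMeasurable (fun l => νZ (Set.Iic (x*(l+1)))) νL := by
    have : (fun l => νZ (Set.Iic (x*(l+1)))) = fun l => νZ (Prod.mk l ⁻¹' S) := by
      funext l; rw [hslice]
    rw [this]
    exact (measurable_measure_prodMk_left hS).aemeasurable
  have hlt : ∀ᵐ l ∂νL, νZ (Set.Iic (x*(l+1))) < ⊤ :=
    Filter.Eventually.of_forall fun l => measure_lt_top _ _
  have htor : (μ {ω | Z ω / (L ω + 1) ≤ x}).toReal
      = ∫ l, (νZ (Set.Iic (x*(l+1)))).toReal ∂νL := by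
    rw [hmeas, ← integral_toReal hfmeas hlt]
  -- pointwise CDF formula a.e.
  set F : ℝ → ℝ := fun t => 1 - Real.exp (-(rZ*t)) * ∑ m ∈ range N, (rZ*t)^m / m.factorial
    with hFdef
  have hFnn : ∀ t : ℝ, 0 ≤ t → 0 ≤ F t := by
    intro t ht
    have h1 : ∑ m ∈ range N, (rZ*t)^m / m.factorial ≤ Real.exp (rZ*t) :=
      Real.sum_le_exp_of_nonneg (by positivity) N
    have h2 := mul_le_mul_of_nonneg_left h1 (Real.exp_nonneg (-(rZ*t)))
    rw [← Real.exp_add, neg_add_cancel, Real.exp_zero] at h2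
    simp only [hFdef]
    linarith
  have hL0' : ∀ᵐ l ∂νL, 0 ≤ l := by
    rw [ae_iff]
    convert hLiio using 2
    ext l
    simp [not_le]
  have hcongr : ∫ l, (νZ (Set.Iic (x*(l+1)))).toReal ∂νL = ∫ l, F (x*(l+1)) ∂νL := by
    refine integral_congr_ae ?_
    filter_upwards [hL0'] with l hl
    have ht : 0 ≤ x*(l+1) := by positivity
    rw [hνZ, gammaMeasure_Iic hrZ hN ht, ENNReal.toReal_ofReal (hFnn _ ht)]
  -- unfold withDensity
  have hwd : ∫ l, F (x*(l+1)) ∂νL = ∫ l, gammaPDFReal D rL l * F (x*(l+1)) := by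
    have hpdfm : Measurable (fun l => (gammaPDFReal D rL l).toNNReal) :=
      (measurable_gammaPDFReal D rL).real_toNNReal
    rw [hνL, gammaMeasure,
      show gammaPDF D rL = fun l => ((gammaPDFReal D rL l).toNNReal : ℝ≥0∞) from rfl,
      integral_withDensity_eq_integral_smul hpdfm]
    refine integral_congr_ae (Filter.Eventually.of_forall fun l => ?_)
    simp only [NNReal.smul_def, smul_eq_mul]
    rw [Real.coe_toNNReal _ (gammaPDFReal_nonneg hD hrL l)]
  -- split the integral
  have hkey := pdf_mul_H_key hrZ hrL hD N hx
  have hsplit : ∫ l, gammaPDFReal D rL l * F (x*(l+1))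
      = 1 - ∑ m ∈ range N, ∑ k ∈ range (m+1),
          (rL^D / Real.Gamma D) * Real.exp (-(rZ*x)) * ((rZ*x)^m / m.factorial) * (m.choose k)
            * ((1/(rZ*x+rL))^((k:ℝ)+D) * Real.Gamma ((k:ℝ)+D)) := by
    have heq : (fun l => gammaPDFReal D rL l * F (x*(l+1)))
        = fun l => gammaPDFReal D rL l - gammaPDFReal D rL l *
            (Real.exp (-(rZ*(x*(l+1)))) * ∑ m ∈ range N, (rZ*(x*(l+1)))^m / m.factorial) := by
      funext l
      simp only [hFdef]
      ring
    rw [heq, integral_sub (integrable_gammaPDFReal hD hrL) hkey.1,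
      integral_gammaPDFReal hD hrL, hkey.2]
  rw [htor, hcongr, hwd, hsplit]
  congr 1
  rw [sum_triangle_reindex N (fun m k =>
    (rL^D / Real.Gamma D) * Real.exp (-(rZ*x)) * ((rZ*x)^m / m.factorial) * (m.choose k)
      * ((1/(rZ*x+rL))^((k:ℝ)+D) * Real.Gamma ((k:ℝ)+D)))]
  refine Finset.sum_congr rfl fun p _ => Finset.sum_congr rfl fun n _ => ?_
  exact term_algebra hθZ hθL hD hx p n
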